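/- Let X be a nonempty set, let h₁ : X → W₁ and h₂ : X → W₂ be functions, and let I be a causal essential set for h₁. If every T ∈ I also satisfies h₂ ∘ T = h₂, then there exists a function v : W₁ → W₂ such that h₂ = v ∘ h₁. -/

import Mathlib

/-- A family `I` of transformations `T : X → X` is a causal essential set for `h` if
`h ∘ T = h` for every `T ∈ I`, and for all `x₁, x₂` with `h x₁ = h x₂` there are finitely
many `T₁, …, T_K ∈ I` such that `(T₁ ∘ ⋯ ∘ T_K) x₁ = x₂`. -/
def IsCausalEssentialSet {X W : Type*} (h : X → W) (I : Set (X → X)) : Prop :=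
  (∀ T ∈ I, h ∘ T = h) ∧
    ∀ x₁ x₂ : X, h x₁ = h x₂ →
      ∃ l : List (X → X), (∀ T ∈ l, T ∈ I) ∧ l.foldr (· ∘ ·) id x₁ = x₂

lemma foldr_inv {X W₂ : Type*} (h₂ : X → W₂) (I : Set (X → X))
    (hinv : ∀ T ∈ I, h₂ ∘ T = h₂) :
    ∀ (l : List (X → X)), (∀ T ∈ l, T ∈ I) → ∀ x, h₂ (l.foldr (· ∘ ·) id x) = h₂ x := by
  intro l
  induction l with
  | nil => intro _ x; rfl
  | cons T t ih =>
    intro hmem x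
    have hT : h₂ ∘ T = h₂ := hinv T (hmem T List.mem_cons_self)
    have := congrFun hT (t.foldr (· ∘ ·) id x)
    simp only [List.foldr_cons, Function.comp_apply] at *
    rw [this, ih (fun S hS => hmem S (List.mem_cons_of_mem _ hS)) x]

/-- Lemma 2: if `I` is a causal essential set for `h₁` and every `T ∈ I` also leaves `h₂`
invariant, then `h₂` factors through `h₁`. -/
theorem stmt_2 {X W₁ W₂ : Type*} [Nonempty X] (h₁ : X → W₁) (h₂ : X → W₂)
    (I : Set (X → X)) (hI : IsCausalEssentialSet h₁ I)
    (hinv : ∀ T ∈ I, h₂ ∘ T = h₂) :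
    ∃ v : W₁ → W₂, h₂ = v ∘ h₁ := by
  classical
  refine ⟨fun w => if hw : ∃ x, h₁ x = w then h₂ hw.choose else h₂ (Classical.arbitrary X), ?_⟩
  funext x
  have hw : ∃ y, h₁ y = h₁ x := ⟨x, rfl⟩
  simp only [Function.comp_apply, dif_pos hw]
  obtain ⟨l, hl, hfold⟩ := hI.2 hw.choose x hw.choose_spec
  exact (congrArg h₂ hfold).symm.trans (foldr_inv h₂ I hinv l hl hw.choose)
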